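/- Let P be a probability distribution on ℝ^d × ℝ^L supported on points z = (x, y) with ‖x‖₂ ≤ R. Let n be even, let z_1 = (x_1, y_1), …, z_n = (x_n, y_n) be i.i.d. samples from P, and let ε_1, …, ε_{n/2} be i.i.d. Rademacher variables independent of the data. Then E[ sup_{A ∈ Ã(r)} (2/n) Σ_{i=1}^{n/2} ε_i · g(⟨y_i, y_{n/2+i}⟩) · (x_iᵀ A x_{n/2+i})² ] ≤ 2 r R² · R_{n/2}(Ã(r)), where R_{n/2}(Ã(r)) := E[ sup_{A ∈ Ã(r)} (2/n) Σ_{i=1}^{n/2} ε_i · x_iᵀ A x_{n/2+i} ]. -/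

import Mathlib

open MeasureTheory Finset
open scoped ENNReal

noncomputable section

/-- A labeled data point z = (x, y) ∈ ℝ^d × ℝ^L. -/
abbrev Pt (d L : ℕ) := (Fin d → ℝ) × (Fin L → ℝ)

/-- Inner product ⟨y, y'⟩ of label vectors. -/
def ipY {L : ℕ} (y y' : Fin L → ℝ) : ℝ := ∑ i, y i * y' i

/-- Bilinear form xᵀ A x'. -/
def qForm {d : ℕ} (A : Matrix (Fin d) (Fin d) ℝ) (x x' : Fin d → ℝ) : ℝ :=
  ∑ i, ∑ j, x i * A i j * x' j

/-- Euclidean norm ‖x‖₂. -/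
def norm2 {d : ℕ} (x : Fin d → ℝ) : ℝ := Real.sqrt (∑ i, x i ^ 2)

/-- Frobenius norm ‖A‖_F. -/
def frobNorm {d : ℕ} (A : Matrix (Fin d) (Fin d) ℝ) : ℝ :=
  Real.sqrt (∑ i, ∑ j, (A i j) ^ 2)

/-- Loss ℓ(A; z, z') := g(⟨y, y'⟩)·(⟨y, y'⟩ − xᵀ A x')² + λ·Tr(A). -/
def lossFn {d L : ℕ} (g : ℝ → ℝ) (lam : ℝ) (A : Matrix (Fin d) (Fin d) ℝ)
    (z z' : Pt d L) : ℝ :=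
  g (ipY z.2 z'.2) * (ipY z.2 z'.2 - qForm A z.1 z'.1) ^ 2 + lam * A.trace

/-- Empirical risk L̂(A; D) := (1/(n(n−1))) Σᵢ Σ_{j≠i} ℓ(A; zᵢ, zⱼ). -/
def empRisk {d L : ℕ} (g : ℝ → ℝ) (lam : ℝ) {n : ℕ} (A : Matrix (Fin d) (Fin d) ℝ)
    (D : Fin n → Pt d L) : ℝ :=
  (1 / ((n : ℝ) * ((n : ℝ) - 1))) * ∑ i, ∑ j ∈ univ.erase i, lossFn g lam A (D i) (D j)

/-- Population risk L(A) := E_{z,z' i.i.d. ∼ P}[ℓ(A; z, z')]. -/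
def popRisk {d L : ℕ} (g : ℝ → ℝ) (lam : ℝ) (P : Measure (Pt d L))
    (A : Matrix (Fin d) (Fin d) ℝ) : ℝ :=
  ∫ z, (∫ z', lossFn g lam A z z' ∂P) ∂P

/-- Risk relative to the training set, L̃(A; D) := (1/n) Σₖ E_{z∼P}[ℓ(A; z, zₖ)]. -/
def tilRisk {d L : ℕ} (g : ℝ → ℝ) (lam : ℝ) (P : Measure (Pt d L)) {n : ℕ}
    (A : Matrix (Fin d) (Fin d) ℝ) (D : Fin n → Pt d L) : ℝ :=
  (1 / (n : ℝ)) * ∑ k, ∫ z, lossFn g lam A z (D k) ∂P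

/-- Law of a Rademacher random variable: uniform on {−1, +1}. -/
def radMeasure : Measure ℝ :=
  (2⁻¹ : ℝ≥0∞) • Measure.dirac (-1) + (2⁻¹ : ℝ≥0∞) • Measure.dirac 1


/-! ### Auxiliary lemmas -/

/-- Sign associated with a Boolean. -/
def rsgn (b : Bool) : ℝ := if b then 1 else -1

lemma abs_rsgn_mul (b : Bool) (x : ℝ) : |rsgn b * x| = |x| := by
  cases b <;> simp [rsgn]

lemma bdd_range {ι : Sort*} (f : ι → ℝ) (C : ℝ) (h : ∀ a, f a ≤ C) :
    BddAbove (Set.range f) := ⟨C, by rintro _ ⟨a, rfl⟩; exact h a⟩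

lemma abs_ciSup_le {ι : Sort*} [Nonempty ι] (f : ι → ℝ) (C : ℝ)
    (h : ∀ a, |f a| ≤ C) : |⨆ a, f a| ≤ C := by
  rw [abs_le]
  constructor
  · obtain ⟨a⟩ := ‹Nonempty ι›
    exact le_trans (abs_le.1 (h a)).1 (le_ciSup (bdd_range f C fun b => (abs_le.1 (h b)).2) a)
  · exact ciSup_le fun a => (abs_le.1 (h a)).2

instance : IsProbabilityMeasure radMeasure := by
  constructor
  simp [radMeasure]
  rw [ENNReal.inv_two_add_inv_two]

lemma radPi_eq (m : ℕ) : (Measure.pi fun _ : Fin m => radMeasure) =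
    ∑ s : Fin m → Bool, ((2 : ℝ≥0∞) ^ m)⁻¹ • Measure.dirac (fun i => rsgn (s i)) := by
  refine Measure.pi_eq fun t ht => ?_
  classical
  rw [Measure.finset_sum_apply]
  have hmem : MeasurableSet (Set.pi Set.univ t) := MeasurableSet.univ_pi ht
  simp only [Measure.smul_apply, smul_eq_mul, Measure.dirac_apply' _ hmem]
  have : ∀ s : Fin m → Bool,
      (Set.pi Set.univ t).indicator (1 : (Fin m → ℝ) → ℝ≥0∞) (fun i => rsgn (s i))
        = ∏ i, (t i).indicator 1 (rsgn (s i)) := by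
    intro s
    rw [Set.indicator_apply]
    by_cases h : (fun i => rsgn (s i)) ∈ Set.pi Set.univ t
    · rw [if_pos h]
      rw [Set.mem_univ_pi] at h
      rw [Finset.prod_congr rfl (fun i _ => Set.indicator_of_mem (h i) (1 : ℝ → ℝ≥0∞))]
      simp
    · rw [if_neg h]
      rw [Set.mem_univ_pi] at h
      push_neg at h
      obtain ⟨i, hi⟩ := h
      rw [Finset.prod_eq_zero (Finset.mem_univ i) (Set.indicator_of_notMem hi _)]
  simp only [this]
  have hrad : ∀ i, radMeasure (t i)
      = 2⁻¹ * ((t i).indicator 1 (-1 : ℝ) + (t i).indicator 1 (1 : ℝ)) := by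
    intro i
    simp [radMeasure, Measure.dirac_apply' _ (ht i), mul_add]
  calc ∑ s : Fin m → Bool, ((2 : ℝ≥0∞) ^ m)⁻¹ * ∏ i, (t i).indicator 1 (rsgn (s i))
      = ((2 : ℝ≥0∞) ^ m)⁻¹ * ∑ s : Fin m → Bool, ∏ i, (t i).indicator 1 (rsgn (s i)) := by
        rw [Finset.mul_sum]
    _ = ((2 : ℝ≥0∞) ^ m)⁻¹ * ∏ i : Fin m, ∑ b : Bool, (t i).indicator 1 (rsgn b) := by
        rw [Finset.prod_univ_sum]
        rw [Fintype.piFinset_univ]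
    _ = ∏ i : Fin m, radMeasure (t i) := by
        rw [Finset.prod_congr rfl fun i _ => hrad i, Finset.prod_mul_distrib]
        simp [rsgn, add_comm]
        rw [ENNReal.inv_pow]

lemma integral_radPi {m : ℕ} (f : (Fin m → ℝ) → ℝ) :
    ∫ eps, f eps ∂(Measure.pi fun _ : Fin m => radMeasure)
      = ((2 : ℝ) ^ m)⁻¹ * ∑ s : Fin m → Bool, f (fun i => rsgn (s i)) := by
  rw [radPi_eq]
  rw [integral_finset_sum_measure (by
    intro s _
    refine (integrable_smul_measure (ENNReal.inv_ne_zero.2 (ENNReal.pow_ne_top (by norm_num)))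
      (by simp)).2 ?_
    refine (integrable_const (f fun i => rsgn (s i))).congr ?_
    rw [Filter.EventuallyEq, ae_dirac_eq]
    exact Filter.eventually_pure.2 rfl)]
  simp only [integral_smul_measure, integral_dirac, smul_eq_mul]
  rw [Finset.mul_sum]
  congr 1
  ext s
  congr 1
  simp [ENNReal.toReal_inv]

lemma sum_rsgn_bound {ι : Type*} {n : ℕ} (φ : Fin n → ι → ℝ) (C : ℝ)
    (hφ : ∀ i a, |φ i a| ≤ C) (t : Fin n → Bool) (a : ι) :
    |∑ i, rsgn (t i) * φ i a| ≤ n * C := by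
  calc |∑ i, rsgn (t i) * φ i a| ≤ ∑ i, |rsgn (t i) * φ i a| :=
        Finset.abs_sum_le_sum_abs _ _
    _ ≤ ∑ _i : Fin n, C := Finset.sum_le_sum fun i _ => by
        rw [abs_rsgn_mul]; exact hφ i a
    _ = n * C := by simp [mul_comm]

lemma step_lemma {ι : Type*} [Nonempty ι] (F φ ψ : ι → ℝ) (CF C : ℝ)
    (hF : ∀ a, |F a| ≤ CF) (hφ : ∀ a, |φ a| ≤ C) (hψ : ∀ a, |ψ a| ≤ C)
    (hlip : ∀ a b, |φ a - φ b| ≤ |ψ a - ψ b|) :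
    (⨆ a, (F a + φ a)) + (⨆ a, (F a - φ a))
      ≤ (⨆ a, (F a + ψ a)) + (⨆ a, (F a - ψ a)) := by
  have B1 : BddAbove (Set.range fun a => F a + ψ a) :=
    bdd_range _ (CF + C) fun a => by
      have := abs_le.1 (hF a); have := abs_le.1 (hψ a); linarith [this.2]
  have B2 : BddAbove (Set.range fun a => F a - ψ a) :=
    bdd_range _ (CF + C) fun a => by
      have h1 := abs_le.1 (hF a); have h2 := abs_le.1 (hψ a); linarith [h1.2, h2.1]
  set Rhs := (⨆ a, (F a + ψ a)) + (⨆ a, (F a - ψ a)) with hR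
  have key : ∀ a b, (F a + φ a) + (F b - φ b) ≤ Rhs := by
    intro a b
    have hl := hlip a b
    have h1 : φ a - φ b ≤ |ψ a - ψ b| := (le_abs_self _).trans hl
    rcases le_total (ψ b) (ψ a) with h | h
    · have e1 : F a + ψ a ≤ ⨆ a, (F a + ψ a) := le_ciSup B1 a
      have e2 : F b - ψ b ≤ ⨆ a, (F a - ψ a) := le_ciSup B2 b
      have : |ψ a - ψ b| = ψ a - ψ b := abs_of_nonneg (by linarith)
      rw [hR]; linarith
    · have e1 : F b + ψ b ≤ ⨆ a, (F a + ψ a) := le_ciSup B1 b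
      have e2 : F a - ψ a ≤ ⨆ a, (F a - ψ a) := le_ciSup B2 a
      have : |ψ a - ψ b| = ψ b - ψ a := by rw [abs_sub_comm]; exact abs_of_nonneg (by linarith)
      rw [hR]; linarith
  have s2le : ∀ a, (⨆ b, (F b - φ b)) ≤ Rhs - (F a + φ a) := fun a =>
    ciSup_le fun b => by linarith [key a b]
  have s1le : (⨆ a, (F a + φ a)) ≤ Rhs - (⨆ b, (F b - φ b)) :=
    ciSup_le fun a => by linarith [s2le a]
  linarith

lemma contraction {ι : Type*} [Nonempty ι] (C : ℝ) :
    ∀ (m : ℕ) (φ ψ : Fin m → ι → ℝ), (∀ i a, |φ i a| ≤ C) → (∀ i a, |ψ i a| ≤ C) →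
    (∀ i a b, |φ i a - φ i b| ≤ |ψ i a - ψ i b|) →
    ∀ (CF : ℝ) (F : ι → ℝ), (∀ a, |F a| ≤ CF) →
    ∑ s : Fin m → Bool, (⨆ a, (F a + ∑ i, rsgn (s i) * φ i a))
      ≤ ∑ s : Fin m → Bool, (⨆ a, (F a + ∑ i, rsgn (s i) * ψ i a)) := by
  intro m
  induction m with
  | zero => intro φ ψ _ _ _ CF F _; simp
  | succ n IH =>
    intro φ ψ hφ hψ hlip CF F hF
    have hreindex : ∀ (χ : Fin (n + 1) → ι → ℝ),
        ∑ s : Fin (n + 1) → Bool, (⨆ a, (F a + ∑ i, rsgn (s i) * χ i a))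
        = ∑ t : Fin n → Bool,
            ((⨆ a, ((F a + ∑ i, rsgn (t i) * χ i.succ a) + χ 0 a)) +
             (⨆ a, ((F a + ∑ i, rsgn (t i) * χ i.succ a) - χ 0 a))) := by
      intro χ
      rw [← (Fin.consEquiv fun _ : Fin (n + 1) => Bool).sum_comp
        (fun s => ⨆ a, (F a + ∑ i, rsgn (s i) * χ i a))]
      rw [Fintype.sum_prod_type, Fintype.sum_bool]
      rw [Finset.sum_add_distrib]
      congr 1
      · exact Finset.sum_congr rfl fun t _ => iSup_congr fun a => by
          simp [Fin.consEquiv, Fin.sum_univ_succ, rsgn]; ring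
      · exact Finset.sum_congr rfl fun t _ => iSup_congr fun a => by
          simp [Fin.consEquiv, Fin.sum_univ_succ, rsgn]; ring
    have hbd : ∀ (χ : Fin (n+1) → ι → ℝ), (∀ i a, |χ i a| ≤ C) →
        ∀ (t : Fin n → Bool) a, |F a + ∑ i, rsgn (t i) * χ i.succ a| ≤ CF + n * C := by
      intro χ hχ t a
      have := sum_rsgn_bound (fun i => χ i.succ) C (fun i a => hχ i.succ a) t a
      calc |F a + ∑ i, rsgn (t i) * χ i.succ a|
          ≤ |F a| + |∑ i, rsgn (t i) * χ i.succ a| := abs_add_le _ _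
        _ ≤ CF + n * C := add_le_add (hF a) this
    calc ∑ s : Fin (n + 1) → Bool, (⨆ a, (F a + ∑ i, rsgn (s i) * φ i a))
        = ∑ t : Fin n → Bool,
            ((⨆ a, ((F a + ∑ i, rsgn (t i) * φ i.succ a) + φ 0 a)) +
             (⨆ a, ((F a + ∑ i, rsgn (t i) * φ i.succ a) - φ 0 a))) := hreindex φ
      _ ≤ ∑ t : Fin n → Bool,
            ((⨆ a, ((F a + ∑ i, rsgn (t i) * φ i.succ a) + ψ 0 a)) +
             (⨆ a, ((F a + ∑ i, rsgn (t i) * φ i.succ a) - ψ 0 a))) := by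
          refine Finset.sum_le_sum fun t _ => ?_
          exact step_lemma _ (φ 0) (ψ 0) (CF + n * C) C (hbd φ hφ t) (hφ 0) (hψ 0)
            (hlip 0)
      _ = ∑ b : Bool, ∑ t : Fin n → Bool,
            (⨆ a, ((F a + rsgn b * ψ 0 a) + ∑ i, rsgn (t i) * φ i.succ a)) := by
          rw [Fintype.sum_bool, ← Finset.sum_add_distrib]
          refine Finset.sum_congr rfl fun t _ => ?_
          congr 1
          · exact iSup_congr fun a => by simp [rsgn]; ring
          · exact iSup_congr fun a => by simp [rsgn]; ring
      _ ≤ ∑ b : Bool, ∑ t : Fin n → Bool,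
            (⨆ a, ((F a + rsgn b * ψ 0 a) + ∑ i, rsgn (t i) * ψ i.succ a)) := by
          refine Finset.sum_le_sum fun b _ => ?_
          refine IH (fun i => φ i.succ) (fun i => ψ i.succ) (fun i a => hφ i.succ a)
            (fun i a => hψ i.succ a) (fun i a b' => hlip i.succ a b') (CF + C)
            (fun a => F a + rsgn b * ψ 0 a) (fun a => ?_)
          calc |F a + rsgn b * ψ 0 a| ≤ |F a| + |rsgn b * ψ 0 a| := abs_add_le _ _
            _ ≤ CF + C := by rw [abs_rsgn_mul]; exact add_le_add (hF a) (hψ 0 a)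
      _ = ∑ t : Fin n → Bool,
            ((⨆ a, ((F a + ∑ i, rsgn (t i) * ψ i.succ a) + ψ 0 a)) +
             (⨆ a, ((F a + ∑ i, rsgn (t i) * ψ i.succ a) - ψ 0 a))) := by
          rw [Fintype.sum_bool, ← Finset.sum_add_distrib]
          refine Finset.sum_congr rfl fun t _ => ?_
          congr 1
          · exact iSup_congr fun a => by simp [rsgn]; ring
          · exact iSup_congr fun a => by simp [rsgn]; ring
      _ = ∑ s : Fin (n + 1) → Bool, (⨆ a, (F a + ∑ i, rsgn (s i) * ψ i a)) :=
          (hreindex ψ).symm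

lemma abs_qForm_le {d : ℕ} (A : Matrix (Fin d) (Fin d) ℝ) (x x' : Fin d → ℝ) :
    |qForm A x x'| ≤ frobNorm A * (norm2 x * norm2 x') := by
  classical
  have h0 : ∀ (y : Fin d → ℝ) (y' : Fin d → ℝ) (B : Matrix (Fin d) (Fin d) ℝ),
      (∑ i, ∑ j, y i * B i j * y' j)
        = ∑ p ∈ (univ ×ˢ univ : Finset (Fin d × Fin d)), (y p.1 * y' p.2) * B p.1 p.2 := by
    intro y y' B
    rw [Finset.sum_product]
    exact Finset.sum_congr rfl fun i _ => Finset.sum_congr rfl fun j _ => by ring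
  have hxx : Real.sqrt (∑ p ∈ (univ ×ˢ univ : Finset (Fin d × Fin d)), (x p.1 * x' p.2) ^ 2)
      = norm2 x * norm2 x' := by
    have : (∑ p ∈ (univ ×ˢ univ : Finset (Fin d × Fin d)), (x p.1 * x' p.2) ^ 2)
        = (∑ i, x i ^ 2) * (∑ j, x' j ^ 2) := by
      rw [Finset.sum_mul_sum, Finset.sum_product]
      exact Finset.sum_congr rfl fun i _ => Finset.sum_congr rfl fun j _ => by ring
    rw [this, Real.sqrt_mul (by positivity)]
    rfl
  have hAA : Real.sqrt (∑ p ∈ (univ ×ˢ univ : Finset (Fin d × Fin d)), (A p.1 p.2) ^ 2)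
      = frobNorm A := by
    rw [Finset.sum_product]; rfl
  rw [abs_le]
  constructor
  · have cs := Real.sum_mul_le_sqrt_mul_sqrt (univ ×ˢ univ : Finset (Fin d × Fin d))
      (fun p => -(x p.1 * x' p.2)) (fun p => A p.1 p.2)
    have e1 : ∑ p ∈ (univ ×ˢ univ : Finset (Fin d × Fin d)),
        (-(x p.1 * x' p.2)) * A p.1 p.2
        = -∑ p ∈ (univ ×ˢ univ : Finset (Fin d × Fin d)), (x p.1 * x' p.2) * A p.1 p.2 := by
      rw [← Finset.sum_neg_distrib]
      exact Finset.sum_congr rfl fun p _ => by ring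
    have e2 : ∑ p ∈ (univ ×ˢ univ : Finset (Fin d × Fin d)), (-(x p.1 * x' p.2)) ^ 2
        = ∑ p ∈ (univ ×ˢ univ : Finset (Fin d × Fin d)), (x p.1 * x' p.2) ^ 2 :=
      Finset.sum_congr rfl fun p _ => by ring
    rw [e1, e2, hxx, hAA] at cs
    have : qForm A x x' = ∑ p ∈ (univ ×ˢ univ : Finset (Fin d × Fin d)),
        (x p.1 * x' p.2) * A p.1 p.2 := h0 x x' A
    rw [this]
    linarith [cs]
  · have cs := Real.sum_mul_le_sqrt_mul_sqrt (univ ×ˢ univ : Finset (Fin d × Fin d))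
      (fun p => x p.1 * x' p.2) (fun p => A p.1 p.2)
    rw [hxx, hAA] at cs
    rw [qForm, h0]
    nlinarith [cs]

lemma nonempty_ball {d : ℕ} {r : ℝ} (hr : 0 < r) :
    Nonempty {A : Matrix (Fin d) (Fin d) ℝ // A.PosSemidef ∧ frobNorm A ≤ r} :=
  ⟨⟨0, Matrix.PosSemidef.zero, by
    have h0 : frobNorm (0 : Matrix (Fin d) (Fin d) ℝ) = 0 := by
      simp [frobNorm]
    rw [h0]; exact hr.le⟩⟩

lemma qK_bound' {d : ℕ} {r : ℝ}
    (A : {A : Matrix (Fin d) (Fin d) ℝ // A.PosSemidef ∧ frobNorm A ≤ r})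
    (x x' : Fin d → ℝ) : |qForm A.1 x x'| ≤ r * (norm2 x * norm2 x') := by
  have h := abs_qForm_le A.1 x x'
  have hn1 : 0 ≤ norm2 x := Real.sqrt_nonneg _
  have hn2 : 0 ≤ norm2 x' := Real.sqrt_nonneg _
  have := mul_le_mul_of_nonneg_right A.2.2 (mul_nonneg hn1 hn2)
  linarith

lemma qK_bound {d : ℕ} {r R : ℝ} (hr : 0 < r) (hR : 0 < R)
    (A : {A : Matrix (Fin d) (Fin d) ℝ // A.PosSemidef ∧ frobNorm A ≤ r})
    (x x' : Fin d → ℝ) (hx : norm2 x ≤ R) (hx' : norm2 x' ≤ R) :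
    |qForm A.1 x x'| ≤ r * R ^ 2 := by
  have h := qK_bound' A x x'
  have hn1 : 0 ≤ norm2 x := Real.sqrt_nonneg _
  have hn2 : 0 ≤ norm2 x' := Real.sqrt_nonneg _
  nlinarith [mul_le_mul hx hx' hn2 hR.le]

lemma bodyL_abs_le {m : ℕ} (c : ℝ) (hc : 0 ≤ c) (gv : Fin m → ℝ)
    (hgv : ∀ i, 0 ≤ gv i ∧ gv i ≤ 1) (q : Fin m → ℝ) (Q : Fin m → ℝ)
    (hq : ∀ i, |q i| ≤ Q i) (s : Fin m → Bool) :
    |c * ∑ i, rsgn (s i) * gv i * (q i) ^ 2| ≤ c * ∑ i, (Q i) ^ 2 := by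
  rw [abs_mul, abs_of_nonneg hc]
  refine mul_le_mul_of_nonneg_left ?_ hc
  refine (Finset.abs_sum_le_sum_abs _ _).trans (Finset.sum_le_sum fun i _ => ?_)
  calc |rsgn (s i) * gv i * q i ^ 2| = |rsgn (s i) * gv i| * |q i ^ 2| := abs_mul _ _
    _ ≤ 1 * Q i ^ 2 := by
        refine mul_le_mul ?_ ?_ (abs_nonneg _) zero_le_one
        · rw [abs_rsgn_mul, abs_of_nonneg (hgv i).1]; exact (hgv i).2
        · rw [abs_pow]; exact pow_le_pow_left₀ (abs_nonneg _) (hq i) 2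
    _ = Q i ^ 2 := one_mul _

lemma bodyR_abs_le {m : ℕ} (c : ℝ) (hc : 0 ≤ c) (q : Fin m → ℝ) (Q : Fin m → ℝ)
    (hq : ∀ i, |q i| ≤ Q i) (s : Fin m → Bool) :
    |c * ∑ i, rsgn (s i) * q i| ≤ c * ∑ i, Q i := by
  rw [abs_mul, abs_of_nonneg hc]
  refine mul_le_mul_of_nonneg_left ?_ hc
  refine (Finset.abs_sum_le_sum_abs _ _).trans (Finset.sum_le_sum fun i _ => ?_)
  rw [abs_rsgn_mul]; exact hq i

set_option maxHeartbeats 1000000 in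
lemma keyineq {d : ℕ} {r R : ℝ} (hr : 0 < r) (hR : 0 < R) (m : ℕ) (c : ℝ) (hc : 0 ≤ c)
    (gv : Fin m → ℝ) (hgv : ∀ i, 0 ≤ gv i ∧ gv i ≤ 1)
    (x x' : Fin m → Fin d → ℝ) (hx : ∀ i, norm2 (x i) ≤ R) (hx' : ∀ i, norm2 (x' i) ≤ R) :
    ∑ s : Fin m → Bool, (⨆ A : {A : Matrix (Fin d) (Fin d) ℝ // A.PosSemidef ∧ frobNorm A ≤ r},
        c * ∑ i, rsgn (s i) * gv i * (qForm A.1 (x i) (x' i)) ^ 2)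
    ≤ (2 * r * R ^ 2) * ∑ s : Fin m → Bool,
        (⨆ A : {A : Matrix (Fin d) (Fin d) ℝ // A.PosSemidef ∧ frobNorm A ≤ r},
        c * ∑ i, rsgn (s i) * qForm A.1 (x i) (x' i)) := by
  classical
  have hne : Nonempty {A : Matrix (Fin d) (Fin d) ℝ // A.PosSemidef ∧ frobNorm A ≤ r} :=
    nonempty_ball hr
  set K := {A : Matrix (Fin d) (Fin d) ℝ // A.PosSemidef ∧ frobNorm A ≤ r} with hK
  have hq : ∀ (A : K) (i : Fin m), |qForm A.1 (x i) (x' i)| ≤ r * R ^ 2 := fun A i =>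
    qK_bound hr hR A (x i) (x' i) (hx i) (hx' i)
  have hφb : ∀ (i : Fin m) (A : K),
      |c * (gv i * (qForm A.1 (x i) (x' i)) ^ 2)| ≤ c * (2 * (r * R ^ 2) ^ 2) := by
    intro i A
    have hg := hgv i
    have hu := hq A i
    have hu0 := abs_nonneg (qForm A.1 (x i) (x' i))
    rw [abs_mul, abs_of_nonneg hc, abs_mul, abs_of_nonneg hg.1, abs_pow]
    have : gv i * |qForm A.1 (x i) (x' i)| ^ 2 ≤ 2 * (r * R ^ 2) ^ 2 := by
      nlinarith [hg.1, hg.2, hu, hu0, sq_nonneg (r * R ^ 2)]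
    exact mul_le_mul_of_nonneg_left this hc
  have hψb : ∀ (i : Fin m) (A : K),
      |c * ((2 * r * R ^ 2) * qForm A.1 (x i) (x' i))| ≤ c * (2 * (r * R ^ 2) ^ 2) := by
    intro i A
    have hu := hq A i
    rw [abs_mul, abs_of_nonneg hc, abs_mul, abs_of_nonneg (by positivity : (0:ℝ) ≤ 2 * r * R ^ 2)]
    refine mul_le_mul_of_nonneg_left ?_ hc
    nlinarith [hu, abs_nonneg (qForm A.1 (x i) (x' i))]
  have hlip : ∀ (i : Fin m) (A B : K),
      |c * (gv i * (qForm A.1 (x i) (x' i)) ^ 2) - c * (gv i * (qForm B.1 (x i) (x' i)) ^ 2)|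
        ≤ |c * ((2 * r * R ^ 2) * qForm A.1 (x i) (x' i))
            - c * ((2 * r * R ^ 2) * qForm B.1 (x i) (x' i))| := by
    intro i A B
    set u := qForm A.1 (x i) (x' i)
    set v := qForm B.1 (x i) (x' i)
    have hu := hq A i
    have hv := hq B i
    have hg := hgv i
    have h1 : c * (gv i * u ^ 2) - c * (gv i * v ^ 2) = (c * gv i * (u + v)) * (u - v) := by ring
    have h2 : c * ((2 * r * R ^ 2) * u) - c * ((2 * r * R ^ 2) * v)
        = (c * (2 * r * R ^ 2)) * (u - v) := by ring
    rw [h1, h2, abs_mul (c * gv i * (u + v)) (u - v), abs_mul (c * (2 * r * R ^ 2)) (u - v)]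
    refine mul_le_mul_of_nonneg_right ?_ (abs_nonneg _)
    rw [abs_of_nonneg (by positivity : (0:ℝ) ≤ c * (2 * r * R ^ 2))]
    calc |c * gv i * (u + v)| = c * gv i * |u + v| := by
          rw [abs_mul, abs_of_nonneg (mul_nonneg hc hg.1)]
      _ ≤ c * (2 * r * R ^ 2) := by
          have habs : |u + v| ≤ 2 * (r * R ^ 2) :=
            (abs_add_le u v).trans (by linarith)
          have h3 : gv i * |u + v| ≤ 1 * (2 * (r * R ^ 2)) :=
            mul_le_mul hg.2 habs (abs_nonneg _) zero_le_one
          have h4 := mul_le_mul_of_nonneg_left h3 hc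
          calc c * gv i * |u + v| = c * (gv i * |u + v|) := by ring
            _ ≤ c * (1 * (2 * (r * R ^ 2))) := h4
            _ = c * (2 * r * R ^ 2) := by ring
  have key := @contraction K hne (c * (2 * (r * R ^ 2) ^ 2)) m
    (fun i A => c * (gv i * (qForm A.1 (x i) (x' i)) ^ 2))
    (fun i A => c * ((2 * r * R ^ 2) * qForm A.1 (x i) (x' i)))
    hφb hψb hlip 0 (fun _ => 0) (by intro a; simp)
  have hLs : ∀ s : Fin m → Bool,
      (⨆ A : K, ((fun _ : K => (0:ℝ)) A
          + ∑ i, rsgn (s i) * (c * (gv i * (qForm A.1 (x i) (x' i)) ^ 2))))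
      = ⨆ A : K, c * ∑ i, rsgn (s i) * gv i * (qForm A.1 (x i) (x' i)) ^ 2 := by
    intro s
    refine iSup_congr fun A => ?_
    rw [zero_add, Finset.mul_sum]
    exact Finset.sum_congr rfl fun i _ => by ring
  have hRs : ∀ s : Fin m → Bool,
      (⨆ A : K, ((fun _ : K => (0:ℝ)) A
          + ∑ i, rsgn (s i) * (c * ((2 * r * R ^ 2) * qForm A.1 (x i) (x' i)))))
      = (2 * r * R ^ 2) * ⨆ A : K, c * ∑ i, rsgn (s i) * qForm A.1 (x i) (x' i) := by
    intro s
    rw [Real.mul_iSup_of_nonneg (by positivity)]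
    refine iSup_congr fun A => ?_
    rw [zero_add, Finset.mul_sum, Finset.mul_sum]
    exact Finset.sum_congr rfl fun i _ => by ring
  simp only [hLs, hRs] at key
  rw [← Finset.mul_sum] at key
  exact key

lemma measurable_iSup_ball {α : Type*} [MeasurableSpace α] {d : ℕ} {r : ℝ}
    (T : Matrix (Fin d) (Fin d) ℝ → α → ℝ)
    (hcont : ∀ z, Continuous fun A => T A z)
    (hmeas : ∀ A, Measurable fun z => T A z)
    (hbdd : ∀ z, BddAbove (Set.range
      fun A : {A : Matrix (Fin d) (Fin d) ℝ // A.PosSemidef ∧ frobNorm A ≤ r} => T A.1 z)) :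
    Measurable fun z =>
      ⨆ A : {A : Matrix (Fin d) (Fin d) ℝ // A.PosSemidef ∧ frobNorm A ≤ r}, T A.1 z := by
  classical
  set K := {A : Matrix (Fin d) (Fin d) ℝ // A.PosSemidef ∧ frobNorm A ≤ r} with hK
  rcases isEmpty_or_nonempty K with hE | hNE
  · have : (fun z => ⨆ A : K, T A.1 z) = fun _ => (0 : ℝ) := by
      funext z; exact Real.iSup_of_isEmpty _
    rw [this]; exact measurable_const
  · haveI : SecondCountableTopology (Matrix (Fin d) (Fin d) ℝ) :=
      inferInstanceAs (SecondCountableTopology (Fin d → Fin d → ℝ))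
    haveI : SecondCountableTopology K :=
      TopologicalSpace.Subtype.secondCountableTopology
        {A : Matrix (Fin d) (Fin d) ℝ | A.PosSemidef ∧ frobNorm A ≤ r}
    haveI : TopologicalSpace.SeparableSpace K :=
      TopologicalSpace.SecondCountableTopology.to_separableSpace
    obtain ⟨D, hDc, hDd⟩ := TopologicalSpace.exists_countable_dense K
    haveI : Countable D := hDc.to_subtype
    haveI : Nonempty D := (hDd.nonempty).to_subtype
    have hDbdd : ∀ z, BddAbove (Set.range fun B : D => T (B : K).1 z) := by
      intro z
      obtain ⟨C, hC⟩ := hbdd z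
      exact ⟨C, by rintro _ ⟨B, rfl⟩; exact hC ⟨(B : K), rfl⟩⟩
    have key : ∀ z, (⨆ A : K, T A.1 z) = ⨆ B : D, T (B : K).1 z := by
      intro z
      refine le_antisymm (ciSup_le fun A => ?_) (ciSup_le fun B => le_ciSup (hbdd z) (B : K))
      have hcl : IsClosed {B : K | T B.1 z ≤ ⨆ B : D, T (B : K).1 z} :=
        isClosed_le ((hcont z).comp continuous_subtype_val) continuous_const
      have hsub : D ⊆ {B : K | T B.1 z ≤ ⨆ B : D, T (B : K).1 z} := fun B hB =>
        le_ciSup (hDbdd z) (⟨B, hB⟩ : D)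
      exact closure_minimal hsub hcl (hDd A)
    have : (fun z => ⨆ A : K, T A.1 z) = fun z => ⨆ B : D, T (B : K).1 z := funext key
    rw [this]
    exact Measurable.iSup fun B => hmeas (B : K).1

lemma continuous_qForm {d : ℕ} (x x' : Fin d → ℝ) :
    Continuous fun A : Matrix (Fin d) (Fin d) ℝ => qForm A x x' := by
  refine continuous_finset_sum _ fun i _ => continuous_finset_sum _ fun j _ => ?_
  exact (continuous_const.mul (continuous_id.matrix_elem i j)).mul continuous_const

lemma measurable_ipY {L : ℕ} {Ω : Type*} [MeasurableSpace Ω] {f h : Ω → (Fin L → ℝ)}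
    (hf : Measurable f) (hh : Measurable h) : Measurable fun ω => ipY (f ω) (h ω) :=
  Finset.measurable_sum _ fun j _ => (hf.eval (a := j)).mul (hh.eval (a := j))

lemma measurable_qForm {d : ℕ} {Ω : Type*} [MeasurableSpace Ω]
    (A : Matrix (Fin d) (Fin d) ℝ) {f h : Ω → (Fin d → ℝ)}
    (hf : Measurable f) (hh : Measurable h) : Measurable fun ω => qForm A (f ω) (h ω) :=
  Finset.measurable_sum _ fun i _ => Finset.measurable_sum _ fun j _ =>
    ((hf.eval (a := i)).mul measurable_const).mul (hh.eval (a := j))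


set_option maxHeartbeats 2000000 in
theorem stmt8 {d L : ℕ} {r R : ℝ} (hr : 0 < r) (hR : 0 < R)
    (g : ℝ → ℝ) (hgm : Measurable g) (hg : ∀ t, 0 ≤ g t ∧ g t ≤ 1)
    (P : Measure (Pt d L)) [IsProbabilityMeasure P]
    (S : Set (Pt d L)) (hSm : MeasurableSet S) (hS1 : P S = 1)
    (hSx : ∀ z ∈ S, norm2 z.1 ≤ R)
    (m : ℕ) :
    (∫ z, (∫ eps, (⨆ A : {A : Matrix (Fin d) (Fin d) ℝ // A.PosSemidef ∧ frobNorm A ≤ r},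
        (2 / ((2 * m : ℕ) : ℝ)) * ∑ i : Fin m,
          eps i * g (ipY (z (⟨(i : ℕ), by have := i.isLt; omega⟩ : Fin (2 * m))).2
                         (z (⟨m + (i : ℕ), by have := i.isLt; omega⟩ : Fin (2 * m))).2) *
            (qForm A.1 (z (⟨(i : ℕ), by have := i.isLt; omega⟩ : Fin (2 * m))).1
                       (z (⟨m + (i : ℕ), by have := i.isLt; omega⟩ : Fin (2 * m))).1) ^ 2)
        ∂(Measure.pi fun _ : Fin m => radMeasure))
      ∂(Measure.pi fun _ : Fin (2 * m) => P)) ≤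
    2 * r * R ^ 2 *
      ∫ z, (∫ eps, (⨆ A : {A : Matrix (Fin d) (Fin d) ℝ // A.PosSemidef ∧ frobNorm A ≤ r},
        (2 / ((2 * m : ℕ) : ℝ)) * ∑ i : Fin m,
          eps i * qForm A.1 (z (⟨(i : ℕ), by have := i.isLt; omega⟩ : Fin (2 * m))).1
                           (z (⟨m + (i : ℕ), by have := i.isLt; omega⟩ : Fin (2 * m))).1)
        ∂(Measure.pi fun _ : Fin m => radMeasure))
      ∂(Measure.pi fun _ : Fin (2 * m) => P) := by
  classical
  have hne : Nonempty {A : Matrix (Fin d) (Fin d) ℝ // A.PosSemidef ∧ frobNorm A ≤ r} :=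
    nonempty_ball hr
  set K := {A : Matrix (Fin d) (Fin d) ℝ // A.PosSemidef ∧ frobNorm A ≤ r} with hK
  have hc0 : (0:ℝ) ≤ 2 / ((2 * m : ℕ) : ℝ) := by positivity
  have h2m : (0:ℝ) ≤ ((2:ℝ) ^ m)⁻¹ := by positivity
  -- index embeddings
  have hI1 : ∀ i : Fin m, ((i : ℕ) : ℕ) < 2 * m := fun i => by have := i.isLt; omega
  have hI2 : ∀ i : Fin m, m + (i : ℕ) < 2 * m := fun i => by have := i.isLt; omega
  set I1 : Fin m → Fin (2 * m) := fun i => ⟨(i : ℕ), hI1 i⟩ with hI1d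
  set I2 : Fin m → Fin (2 * m) := fun i => ⟨m + (i : ℕ), hI2 i⟩ with hI2d
  -- basic measurability
  have hmx : ∀ k : Fin (2 * m), Measurable fun z : Fin (2 * m) → Pt d L => (z k).1 :=
    fun k => (measurable_pi_apply k).fst
  have hmy : ∀ k : Fin (2 * m), Measurable fun z : Fin (2 * m) → Pt d L => (z k).2 :=
    fun k => (measurable_pi_apply k).snd
  -- almost-everywhere membership in S
  have haeS : ∀ᵐ z ∂(Measure.pi fun _ : Fin (2 * m) => P), ∀ k, z k ∈ S := by
    have hms : MeasurableSet (Set.pi Set.univ fun _ : Fin (2 * m) => S) :=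
      MeasurableSet.univ_pi fun _ => hSm
    have hcompl : (Measure.pi fun _ : Fin (2 * m) => P)
        ((Set.pi Set.univ fun _ : Fin (2 * m) => S)ᶜ) = 0 := by
      rw [measure_compl hms (measure_ne_top _ _)]
      rw [Measure.pi_pi]
      simp [hS1]
    have hset : {z : Fin (2 * m) → Pt d L | ¬ ∀ k, z k ∈ S}
        = (Set.pi Set.univ fun _ : Fin (2 * m) => S)ᶜ := by
      ext z; simp [Set.mem_univ_pi]
    rw [ae_iff, hset]
    exact hcompl
  -- rewrite the inner (Rademacher) integrals as finite sums
  simp only [integral_radPi]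
  -- measurability of the suprema
  have hmeasL : ∀ s : Fin m → Bool, Measurable (fun z : Fin (2 * m) → Pt d L =>
      ⨆ A : K, (2 / ((2 * m : ℕ) : ℝ)) * ∑ i : Fin m,
        rsgn (s i) * g (ipY (z (I1 i)).2 (z (I2 i)).2) *
          (qForm A.1 (z (I1 i)).1 (z (I2 i)).1) ^ 2) := by
    intro s
    refine measurable_iSup_ball (α := Fin (2 * m) → Pt d L)
      (fun A z => (2 / ((2 * m : ℕ) : ℝ)) * ∑ i : Fin m,
        rsgn (s i) * g (ipY (z (I1 i)).2 (z (I2 i)).2) *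
          (qForm A (z (I1 i)).1 (z (I2 i)).1) ^ 2) ?_ ?_ ?_
    · intro z
      exact continuous_const.mul (continuous_finset_sum _ fun i _ =>
        continuous_const.mul ((continuous_qForm _ _).pow 2))
    · intro A
      refine (Finset.measurable_sum _ fun i _ => ?_).const_mul _
      exact ((measurable_const.mul (hgm.comp (measurable_ipY
        ((hmy (I1 i))) ((hmy (I2 i)))))).mul
        ((measurable_qForm A (hmx (I1 i)) (hmx (I2 i))).pow_const 2))
    · intro z
      refine bdd_range _ ((2 / ((2 * m : ℕ) : ℝ)) *
        ∑ i : Fin m, (r * (norm2 ((z (I1 i)).1) * norm2 ((z (I2 i)).1))) ^ 2) fun A => ?_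
      refine le_trans (le_abs_self _) ?_
      exact bodyL_abs_le _ hc0 (fun i => g (ipY (z (I1 i)).2 (z (I2 i)).2))
        (fun i => hg _) (fun i => qForm A.1 (z (I1 i)).1 (z (I2 i)).1)
        (fun i => r * (norm2 ((z (I1 i)).1) * norm2 ((z (I2 i)).1)))
        (fun i => qK_bound' A _ _) s
  have hmeasR : ∀ s : Fin m → Bool, Measurable (fun z : Fin (2 * m) → Pt d L =>
      ⨆ A : K, (2 / ((2 * m : ℕ) : ℝ)) * ∑ i : Fin m,
        rsgn (s i) * qForm A.1 (z (I1 i)).1 (z (I2 i)).1) := by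
    intro s
    refine measurable_iSup_ball (α := Fin (2 * m) → Pt d L)
      (fun A z => (2 / ((2 * m : ℕ) : ℝ)) * ∑ i : Fin m,
        rsgn (s i) * qForm A (z (I1 i)).1 (z (I2 i)).1) ?_ ?_ ?_
    · intro z
      exact continuous_const.mul (continuous_finset_sum _ fun i _ =>
        continuous_const.mul (continuous_qForm _ _))
    · intro A
      refine (Finset.measurable_sum _ fun i _ => ?_).const_mul _
      exact measurable_const.mul (measurable_qForm A (hmx (I1 i)) (hmx (I2 i)))
    · intro z
      refine bdd_range _ ((2 / ((2 * m : ℕ) : ℝ)) *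
        ∑ i : Fin m, r * (norm2 ((z (I1 i)).1) * norm2 ((z (I2 i)).1))) fun A => ?_
      refine le_trans (le_abs_self _) ?_
      exact bodyR_abs_le _ hc0 (fun i => qForm A.1 (z (I1 i)).1 (z (I2 i)).1)
        (fun i => r * (norm2 ((z (I1 i)).1) * norm2 ((z (I2 i)).1)))
        (fun i => qK_bound' A _ _) s
  -- integrability
  have hIntL : Integrable (fun z : Fin (2 * m) → Pt d L =>
      ((2:ℝ) ^ m)⁻¹ * ∑ s : Fin m → Bool, ⨆ A : K, (2 / ((2 * m : ℕ) : ℝ)) *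
        ∑ i : Fin m, rsgn (s i) * g (ipY (z (I1 i)).2 (z (I2 i)).2) *
          (qForm A.1 (z (I1 i)).1 (z (I2 i)).1) ^ 2)
      (Measure.pi fun _ : Fin (2 * m) => P) := by
    refine Integrable.mono' (integrable_const (((2:ℝ) ^ m)⁻¹ *
      ∑ _s : Fin m → Bool, (2 / ((2 * m : ℕ) : ℝ)) * ∑ _i : Fin m, (r * R ^ 2) ^ 2)) ?_ ?_
    · exact ((Finset.measurable_sum _ fun s _ => hmeasL s).const_mul _).aestronglyMeasurable
    · filter_upwards [haeS] with z hz
      rw [Real.norm_eq_abs, abs_mul, abs_of_nonneg h2m]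
      refine mul_le_mul_of_nonneg_left ?_ h2m
      refine (Finset.abs_sum_le_sum_abs _ _).trans (Finset.sum_le_sum fun s _ => ?_)
      refine (@abs_ciSup_le K hne _ _ fun A => ?_)
      exact bodyL_abs_le _ hc0 (fun i => g (ipY (z (I1 i)).2 (z (I2 i)).2))
        (fun i => hg _) (fun i => qForm A.1 (z (I1 i)).1 (z (I2 i)).1)
        (fun _ => r * R ^ 2)
        (fun i => qK_bound hr hR A _ _ (hSx _ (hz (I1 i))) (hSx _ (hz (I2 i)))) s
  have hIntR : Integrable (fun z : Fin (2 * m) → Pt d L =>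
      ((2:ℝ) ^ m)⁻¹ * ∑ s : Fin m → Bool, ⨆ A : K, (2 / ((2 * m : ℕ) : ℝ)) *
        ∑ i : Fin m, rsgn (s i) * qForm A.1 (z (I1 i)).1 (z (I2 i)).1)
      (Measure.pi fun _ : Fin (2 * m) => P) := by
    refine Integrable.mono' (integrable_const (((2:ℝ) ^ m)⁻¹ *
      ∑ _s : Fin m → Bool, (2 / ((2 * m : ℕ) : ℝ)) * ∑ _i : Fin m, (r * R ^ 2))) ?_ ?_
    · exact ((Finset.measurable_sum _ fun s _ => hmeasR s).const_mul _).aestronglyMeasurable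
    · filter_upwards [haeS] with z hz
      rw [Real.norm_eq_abs, abs_mul, abs_of_nonneg h2m]
      refine mul_le_mul_of_nonneg_left ?_ h2m
      refine (Finset.abs_sum_le_sum_abs _ _).trans (Finset.sum_le_sum fun s _ => ?_)
      refine (@abs_ciSup_le K hne _ _ fun A => ?_)
      exact bodyR_abs_le _ hc0 (fun i => qForm A.1 (z (I1 i)).1 (z (I2 i)).1)
        (fun _ => r * R ^ 2)
        (fun i => qK_bound hr hR A _ _ (hSx _ (hz (I1 i))) (hSx _ (hz (I2 i)))) s
  rw [← MeasureTheory.integral_const_mul]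
  refine integral_mono_ae hIntL (hIntR.const_mul _) ?_
  filter_upwards [haeS] with z hz
  have hkey := keyineq hr hR m (2 / ((2 * m : ℕ) : ℝ)) hc0
    (fun i => g (ipY (z (I1 i)).2 (z (I2 i)).2)) (fun i => hg _)
    (fun i => (z (I1 i)).1) (fun i => (z (I2 i)).1)
    (fun i => hSx _ (hz (I1 i))) (fun i => hSx _ (hz (I2 i)))
  rw [mul_left_comm]
  exact mul_le_mul_of_nonneg_left hkey h2m

end
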